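/- Any two maximal chains in the canonical submodule lattice L(M) of a string module M yield the same element of the symmetric group S_{n+1}: if σ = s_{i_1}⋯s_{i_n} and σ' = s_{j_1}⋯s_{j_n} are the reduced expressions given by the edge labels of two maximal chains, then σ = σ'. Moreover, whenever two edges labelled i and j bound a square (mesh) in the Hasse diagram of L(M), one has |i − j| > 1, so s_i s_j = s_j s_i. -/

import Mathlib

/-- A canonical submodule of the string module of a string with arrow data `s`
(`s.getD i false = true` means the `i`-th arrow is direct, pointing from vertex position
`i` to position `i + 1`; `false` means it is inverse, pointing from `i + 1` to `i`),
described by the set `S` of vertex positions supporting it: `S` must be closed under the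
arrow maps of the string module. -/
def IsCanonSub (s : List Bool) (S : Finset ℕ) : Prop :=
  (∀ i ∈ S, i < s.length + 1) ∧
  ∀ i < s.length,
    (s.getD i false = true → i ∈ S → i + 1 ∈ S) ∧
    (s.getD i false = false → i + 1 ∈ S → i ∈ S)

open Fin.NatCast in
/-- The simple transposition `s_i = (i, i+1)` in the symmetric group on
`{0, 1, …, n + 1}` (tiles are numbered `0, …, n`, so the ambient symmetric group is
`S_{n+2}`, the symmetric group on one more letter than the number of tiles). -/
def adjTrans (n : ℕ) (i : ℕ) : Equiv.Perm (Fin (n + 2)) :=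
  Equiv.swap (i : Fin (n + 2)) ((i + 1 : ℕ) : Fin (n + 2))

/-- `c`, with edge labels `lab`, is a maximal chain in the canonical submodule lattice of
the string with arrow data `s` (of length `n`, so the snake graph has `n + 1` tiles
numbered `0, …, n`): it runs from the zero submodule to the whole module, each step
inserting the single position `lab k`. -/
def IsSubmodMaxChain (n : ℕ) (s : List Bool) (c : Fin (n + 2) → Finset ℕ)
    (lab : Fin (n + 1) → ℕ) : Prop :=
  c 0 = ∅ ∧ c (Fin.last (n + 1)) = Finset.range (n + 1) ∧
  (∀ k, IsCanonSub s (c k)) ∧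
  ∀ k : Fin (n + 1), lab k ∉ c k.castSucc ∧ c k.succ = insert (lab k) (c k.castSucc)

/-- `j` must be inserted before `i` in any maximal chain. -/
def Prec (s : List Bool) (j i : ℕ) : Prop :=
  (i = j + 1 ∧ j < s.length ∧ s.getD j false = false) ∨
  (j = i + 1 ∧ i < s.length ∧ s.getD i false = true)

/-- Every element's required predecessors appear before it (or lie in `D`). -/
def Resp (s : List Bool) (D : Finset ℕ) (L : List ℕ) : Prop :=
  ∀ l₁ i l₂, L = l₁ ++ i :: l₂ → ∀ j, Prec s j i → j ∈ l₁ ∨ j ∈ D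

lemma Prec.ne {s : List Bool} {j i : ℕ} (h : Prec s j i) : j ≠ i := by
  rcases h with ⟨h, -⟩ | ⟨h, -⟩ <;> omega

lemma mem_of_prec {s : List Bool} {S : Finset ℕ} {i : ℕ}
    (hS : IsCanonSub s (insert i S)) {j : ℕ} (hj : Prec s j i) : j ∈ S := by
  have hji : j ≠ i := hj.ne
  rcases hj with ⟨h1, h2, h3⟩ | ⟨h1, h2, h3⟩
  · have := (hS.2 j h2).2 h3 (by rw [← h1]; exact Finset.mem_insert_self _ _)
    rcases Finset.mem_insert.1 this with h | h
    · exact absurd h hji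
    · exact h
  · have := (hS.2 i h2).1 h3 (Finset.mem_insert_self _ _)
    rw [← h1] at this
    rcases Finset.mem_insert.1 this with h | h
    · exact absurd h hji
    · exact h

lemma gap_of_not_prec {n : ℕ} {s : List Bool} (hs : s.length = n) {i j : ℕ}
    (hi : i ≤ n) (hj : j ≤ n) (hij : i ≠ j)
    (h1 : ¬ Prec s i j) (h2 : ¬ Prec s j i) : i + 1 < j ∨ j + 1 < i := by
  by_cases hc : j = i + 1
  · exfalso
    have hilen : i < s.length := by omega
    cases hb : s.getD i false with
    | false => exact h1 (Or.inl ⟨hc, hilen, hb⟩)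
    | true => exact h2 (Or.inr ⟨hc, hilen, hb⟩)
  · by_cases hc' : i = j + 1
    · exfalso
      have hjlen : j < s.length := by omega
      cases hb : s.getD j false with
      | false => exact h2 (Or.inl ⟨hc', hjlen, hb⟩)
      | true => exact h1 (Or.inr ⟨hc', hjlen, hb⟩)
    · omega

open Fin.NatCast in
lemma fin_cast_ne {n a b : ℕ} (ha : a < n + 2) (hb : b < n + 2) (hab : a ≠ b) :
    (a : Fin (n + 2)) ≠ (b : Fin (n + 2)) := by
  intro h
  apply hab
  have := congrArg Fin.val h
  rwa [Fin.val_cast_of_lt ha, Fin.val_cast_of_lt hb] at this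

open Fin.NatCast in
lemma adjTrans_comm {n i j : ℕ} (h : i + 1 < j ∨ j + 1 < i) (hi : i ≤ n) (hj : j ≤ n) :
    adjTrans n i * adjTrans n j = adjTrans n j * adjTrans n i := by
  have hi1 : i + 1 < n + 2 := by omega
  have hj1 : j + 1 < n + 2 := by omega
  have hij : i ≠ j := by omega
  have h1 : (i : Fin (n + 2)) ≠ (j : Fin (n + 2)) := fin_cast_ne (by omega) (by omega) hij
  have h2 : (i : Fin (n + 2)) ≠ ((j + 1 : ℕ) : Fin (n + 2)) :=
    fin_cast_ne (by omega) hj1 (by omega)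
  have h3 : ((i + 1 : ℕ) : Fin (n + 2)) ≠ (j : Fin (n + 2)) :=
    fin_cast_ne hi1 (by omega) (by omega)
  have h4 : ((i + 1 : ℕ) : Fin (n + 2)) ≠ ((j + 1 : ℕ) : Fin (n + 2)) :=
    fin_cast_ne hi1 hj1 (by omega)
  have hd : (adjTrans n i).Disjoint (adjTrans n j) := by
    intro x
    by_cases hxi : x = (i : Fin (n + 2))
    · right; subst hxi; exact Equiv.swap_apply_of_ne_of_ne h1 h2
    · by_cases hxi1 : x = ((i + 1 : ℕ) : Fin (n + 2))
      · right; subst hxi1; exact Equiv.swap_apply_of_ne_of_ne h3 h4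
      · left; exact Equiv.swap_apply_of_ne_of_ne hxi hxi1
  exact hd.commute.eq

lemma mul_prod_comm {n : ℕ} (x : ℕ) (l : List ℕ)
    (h : ∀ y ∈ l, adjTrans n x * adjTrans n y = adjTrans n y * adjTrans n x) :
    adjTrans n x * (l.map (adjTrans n)).prod = (l.map (adjTrans n)).prod * adjTrans n x := by
  induction l with
  | nil => simp
  | cons y t ih =>
    simp only [List.map_cons, List.prod_cons, ← mul_assoc, h y (List.mem_cons_self)]
    rw [mul_assoc, ih (fun z hz => h z (List.mem_cons_of_mem _ hz)), ← mul_assoc]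

lemma resp_append_middle {s : List Bool} {D : Finset ℕ} {x : ℕ} {u v : List ℕ}
    (h : Resp s D (u ++ x :: v)) : Resp s (insert x D) (u ++ v) := by
  intro a i b hab j hj
  rcases List.append_eq_append_iff.1 hab with ⟨w, hw1, hw2⟩ | ⟨w, hw1, hw2⟩
  · -- a = u ++ w, v = w ++ i :: b
    have : u ++ x :: v = (u ++ x :: w) ++ i :: b := by
      rw [hw2]; simp
    rcases h _ _ _ this j hj with hm | hm
    · rcases List.mem_append.1 hm with hm | hm
      · exact Or.inl (by rw [hw1]; exact List.mem_append.2 (Or.inl hm))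
      · rcases List.mem_cons.1 hm with hm | hm
        · exact Or.inr (by rw [hm]; exact Finset.mem_insert_self _ _)
        · exact Or.inl (by rw [hw1]; exact List.mem_append.2 (Or.inr hm))
    · exact Or.inr (Finset.mem_insert_of_mem hm)
  · -- u = a ++ w, i :: b = w ++ v
    cases w with
    | nil =>
      -- u = a, v = i :: b
      simp only [List.append_nil] at hw1
      simp only [List.nil_append] at hw2
      have : u ++ x :: v = (u ++ [x]) ++ i :: b := by rw [← hw2]; simp
      rcases h _ _ _ this j hj with hm | hm
      · rcases List.mem_append.1 hm with hm | hm
        · exact Or.inl (hw1 ▸ hm)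
        · exact Or.inr (by simp at hm; rw [hm]; exact Finset.mem_insert_self _ _)
      · exact Or.inr (Finset.mem_insert_of_mem hm)
    | cons w0 wt =>
      -- i :: b = w0 :: (wt ++ v), so w0 = i, b = wt ++ v, u = a ++ i :: wt
      rw [List.cons_append] at hw2
      obtain ⟨hw0, hb⟩ := List.cons_eq_cons.1 hw2
      subst hw0
      have : u ++ x :: v = a ++ i :: (wt ++ x :: v) := by rw [hw1]; simp
      rcases h _ _ _ this j hj with hm | hm
      · exact Or.inl hm
      · exact Or.inr (Finset.mem_insert_of_mem hm)

lemma resp_cons {s : List Bool} {D : Finset ℕ} {x : ℕ} {t : List ℕ}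
    (h : Resp s D (x :: t)) : Resp s (insert x D) t :=
  resp_append_middle (u := []) (v := t) h

lemma prod_eq_of_resp {n : ℕ} {s : List Bool} (hs : s.length = n) :
    ∀ (L : List ℕ) (L' : List ℕ) (D : Finset ℕ), L.Nodup → L.Perm L' →
    (∀ a ∈ L, a ≤ n) → (∀ a ∈ L, a ∉ D) →
    Resp s D L → Resp s D L' →
    (L.map (adjTrans n)).prod = (L'.map (adjTrans n)).prod := by
  intro L
  induction L with
  | nil =>
    intro L' D _ hperm _ _ _ _
    rw [hperm.nil_eq]
  | cons x t ih =>
    intro L' D hnd hperm hbd hD hR hR'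
    have hxL' : x ∈ L' := hperm.mem_iff.1 (List.mem_cons_self)
    obtain ⟨l₁, l₂, rfl⟩ := List.append_of_mem hxL'
    have hnd' : (l₁ ++ x :: l₂).Nodup := hperm.nodup hnd
    have hxl₁ : x ∉ l₁ := by
      intro hm
      exact (List.disjoint_of_nodup_append hnd') hm (List.mem_cons_self)
    -- commuting with everything in l₁
    have hcomm : ∀ y ∈ l₁, adjTrans n x * adjTrans n y = adjTrans n y * adjTrans n x := by
      intro y hy
      have hyL : y ∈ x :: t := hperm.mem_iff.2 (List.mem_append.2 (Or.inl hy))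
      have hxy : x ≠ y := fun h => hxl₁ (h ▸ hy)
      have hyD : y ∉ D := hD y hyL
      have hxD : x ∉ D := hD x (List.mem_cons_self)
      have hnpxy : ¬ Prec s x y := by
        intro hp
        obtain ⟨a, b, hab⟩ := List.append_of_mem hy
        have : l₁ ++ x :: l₂ = a ++ y :: (b ++ x :: l₂) := by rw [hab]; simp
        rcases hR' _ _ _ this x hp with hm | hm
        · apply hxl₁; rw [hab]; exact List.mem_append.2 (Or.inl hm)
        · exact hxD hm
      have hnpyx : ¬ Prec s y x := by
        intro hp
        rcases hR [] x t rfl y hp with hm | hm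
        · simp at hm
        · exact hyD hm
      exact adjTrans_comm (gap_of_not_prec hs (hbd x (List.mem_cons_self)) (hbd y hyL)
        hxy hnpxy hnpyx) (hbd x (List.mem_cons_self)) (hbd y hyL)
    have hperm' : t.Perm (l₁ ++ l₂) := by
      have h1 : (x :: t).Perm (x :: (l₁ ++ l₂)) := hperm.trans List.perm_middle
      exact (List.perm_cons x).1 h1
    have key : (t.map (adjTrans n)).prod = ((l₁ ++ l₂).map (adjTrans n)).prod := by
      apply ih (l₁ ++ l₂) (insert x D) (List.nodup_cons.1 hnd).2 hperm'
      · intro a ha; exact hbd a (List.mem_cons_of_mem _ ha)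
      · intro a ha
        simp only [Finset.mem_insert, not_or]
        exact ⟨fun h => (List.nodup_cons.1 hnd).1 (h ▸ ha), hD a (List.mem_cons_of_mem _ ha)⟩
      · exact resp_cons hR
      · exact resp_append_middle hR'
    calc ((x :: t).map (adjTrans n)).prod
        = adjTrans n x * (t.map (adjTrans n)).prod := by simp
      _ = adjTrans n x * ((l₁ ++ l₂).map (adjTrans n)).prod := by rw [key]
      _ = adjTrans n x * ((l₁.map (adjTrans n)).prod * (l₂.map (adjTrans n)).prod) := by
            simp
      _ = (l₁.map (adjTrans n)).prod * (adjTrans n x * (l₂.map (adjTrans n)).prod) := by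
            rw [← mul_assoc, mul_prod_comm x l₁ hcomm, mul_assoc]
      _ = ((l₁ ++ x :: l₂).map (adjTrans n)).prod := by simp

section Chain

variable {n : ℕ} {s : List Bool} {c : Fin (n + 2) → Finset ℕ} {lab : Fin (n + 1) → ℕ}

lemma chain_prefix (hc : IsSubmodMaxChain n s c lab) :
    ∀ k : Fin (n + 2), c k = ((List.ofFn lab).take k).toFinset := by
  intro k
  induction k using Fin.induction with
  | zero => simpa using hc.1
  | succ k ih =>
    have h := (hc.2.2.2 k).2
    have hvs : ((k.succ : Fin (n + 2)) : ℕ) = (k : ℕ) + 1 := rfl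
    have hvc : ((k.castSucc : Fin (n + 2)) : ℕ) = (k : ℕ) := rfl
    rw [h, ih, hvs, hvc, List.take_succ]
    have hget : (List.ofFn lab)[(k : ℕ)]? = some (lab k) := by
      rw [List.getElem?_ofFn]
      simp [List.ofFnNthVal, k.isLt]
    rw [hget]
    simp only [Option.toList_some, List.toFinset_append, List.toFinset_cons,
      List.toFinset_nil, LawfulSingleton.insert_empty_eq]
    rw [Finset.union_comm]
    ext x; simp

lemma chain_mono (hc : IsSubmodMaxChain n s c lab) {a b : Fin (n + 2)} (hab : a ≤ b) :
    c a ⊆ c b := by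
  rw [chain_prefix hc a, chain_prefix hc b]
  intro x hx
  rw [List.mem_toFinset] at hx ⊢
  exact (List.take_isPrefix_take.2 (Or.inl hab)).subset hx

lemma chain_nodup (hc : IsSubmodMaxChain n s c lab) : (List.ofFn lab).Nodup := by
  rw [List.nodup_ofFn]
  have key : ∀ a b : Fin (n + 1), a < b → lab a ≠ lab b := by
    intro a b hlt hab
    have h1 : lab a ∈ c a.succ := by
      rw [(hc.2.2.2 a).2]; exact Finset.mem_insert_self _ _
    have h2 : c a.succ ⊆ c b.castSucc := chain_mono hc (by
      simp only [Fin.le_def, Fin.val_succ, Fin.coe_castSucc]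
      omega)
    exact (hc.2.2.2 b).1 (hab ▸ h2 h1)
  intro a b hab
  rcases lt_trichotomy a b with h | h | h
  · exact absurd hab (key a b h)
  · exact h
  · exact absurd hab.symm (key b a h)

lemma chain_toFinset (hc : IsSubmodMaxChain n s c lab) :
    (List.ofFn lab).toFinset = Finset.range (n + 1) := by
  have h := chain_prefix hc (Fin.last (n + 1))
  rw [hc.2.1] at h
  have h2 : List.take (((Fin.last (n + 1) : Fin (n + 2))) : ℕ) (List.ofFn lab)
      = List.ofFn lab := by
    apply List.take_of_length_le
    simp [Fin.last]
  rw [h2] at h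
  exact h.symm

lemma chain_resp (hc : IsSubmodMaxChain n s c lab) : Resp s ∅ (List.ofFn lab) := by
  intro l₁ i l₂ hL j hj
  left
  have hlen : l₁.length < n + 1 := by
    have := congrArg List.length hL
    simp at this
    omega
  set k : Fin (n + 1) := ⟨l₁.length, hlen⟩ with hk
  have hik : i = lab k := by
    have h1 : (List.ofFn lab)[l₁.length]? = some i := by
      rw [hL, List.getElem?_append_right (le_refl _)]
      simp
    have h2 : (List.ofFn lab)[l₁.length]? = some (lab k) := by
      rw [List.getElem?_ofFn]
      simp [List.ofFnNthVal, hlen, hk]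
    rw [h1] at h2
    exact (Option.some.injEq _ _ ▸ h2)
  have hck : c k.castSucc = l₁.toFinset := by
    rw [chain_prefix hc k.castSucc]
    have : ((k.castSucc : Fin (n + 2)) : ℕ) = l₁.length := rfl
    rw [this, hL, List.take_left]
  have hcanon : IsCanonSub s (c k.succ) := hc.2.2.1 k.succ
  rw [(hc.2.2.2 k).2, hck, ← hik] at hcanon
  have := mem_of_prec hcanon hj
  rwa [List.mem_toFinset] at this

end Chain

lemma mesh_part {n : ℕ} {s : List Bool} (hs : s.length = n)
    (S : Finset ℕ) (i j : ℕ) (_hS : IsCanonSub s S) (hiS : i ∉ S) (hjS : j ∉ S)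
    (hij : i ≠ j) (hins_i : IsCanonSub s (insert i S)) (hins_j : IsCanonSub s (insert j S)) :
    (i + 1 < j ∨ j + 1 < i) ∧
      adjTrans n i * adjTrans n j = adjTrans n j * adjTrans n i := by
  have hi : i ≤ n := by
    have := hins_i.1 i (Finset.mem_insert_self _ _); omega
  have hj : j ≤ n := by
    have := hins_j.1 j (Finset.mem_insert_self _ _); omega
  have hnpij : ¬ Prec s i j := fun hp => hiS (mem_of_prec hins_j hp)
  have hnpji : ¬ Prec s j i := fun hp => hjS (mem_of_prec hins_i hp)
  have hgap := gap_of_not_prec hs hi hj hij hnpij hnpji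
  exact ⟨hgap, adjTrans_comm hgap hi hj⟩

/-- Any two maximal chains in the canonical submodule lattice `L(M)` of a string module
`M` yield the same element of the symmetric group: the products of the simple
transpositions given by their edge labels coincide.  Moreover, whenever two labels
`i, j` bound a square (mesh) in the Hasse diagram of `L(M)` (both can be added to a
canonical submodule in either order), one has `|i - j| > 1`, so the corresponding simple
transpositions commute. -/
theorem maximal_chains_same_coxeter_element (n : ℕ) (s : List Bool) (hs : s.length = n)
    (c c' : Fin (n + 2) → Finset ℕ) (lab lab' : Fin (n + 1) → ℕ)
    (hc : IsSubmodMaxChain n s c lab) (hc' : IsSubmodMaxChain n s c' lab') :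
    ((List.ofFn lab).map (adjTrans n)).prod = ((List.ofFn lab').map (adjTrans n)).prod ∧
    (∀ (S : Finset ℕ) (i j : ℕ), IsCanonSub s S → i ∉ S → j ∉ S → i ≠ j →
      IsCanonSub s (insert i S) → IsCanonSub s (insert j S) →
      (i + 1 < j ∨ j + 1 < i) ∧
        adjTrans n i * adjTrans n j = adjTrans n j * adjTrans n i) := by
  constructor
  · have hnd := chain_nodup hc
    have hnd' := chain_nodup hc'
    have hperm : (List.ofFn lab).Perm (List.ofFn lab') := by
      rw [List.perm_ext_iff_of_nodup hnd hnd']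
      intro a
      rw [← List.mem_toFinset, ← List.mem_toFinset (l := List.ofFn lab'),
        chain_toFinset hc, chain_toFinset hc']
    apply prod_eq_of_resp hs _ _ ∅ hnd hperm
    · intro a ha
      have : a ∈ (List.ofFn lab).toFinset := List.mem_toFinset.2 ha
      rw [chain_toFinset hc] at this
      have := Finset.mem_range.1 this
      omega
    · intro a _; exact Finset.notMem_empty a
    · exact chain_resp hc
    · exact chain_resp hc'
  · intro S i j hS hiS hjS hij h1 h2
    exact mesh_part hs S i j hS hiS hjS hij h1 h2
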